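/- Let ε ∈ (0, 1/2] and κ' ∈ (0,1). Let f ∈ ℝ^E be a strictly feasible circulation with cᵀf > F, let g̃ ∈ ℝ^E satisfy ‖L(f)^{−1}(g̃ − g(f))‖_∞ ≤ ε, and let ℓ̃ ∈ ℝ^E with ℓ̃ > 0 satisfy ℓ̃ ≈₂ ℓ(f), with L̃ = diag(ℓ̃). If Δ ∈ ℝ^E is a nonzero circulation with g̃ᵀΔ / ‖L̃Δ‖₁ ≤ −κ', then |cᵀΔ| / (cᵀf − F) ≤ |g̃ᵀΔ| / (κ'·m). -/

import Mathlib

/-- A vector `f ∈ ℝ^E` is a circulation in the directed multigraph given by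
`tail, head : E → V` if at every vertex the inflow equals the outflow. -/
def IsCirculation {V E : Type*} [Fintype E] [DecidableEq V]
    (tail head : E → V) (f : E → ℝ) : Prop :=
  ∀ v : V, (∑ e : E, if head e = v then f e else 0) = ∑ e : E, if tail e = v then f e else 0

set_option maxHeartbeats 1600000 in
/-- Residual stability: if `Δ` is a nonzero circulation whose ratio with respect to
approximate gradients and lengths is at most `−κ'`, then
`|cᵀΔ|/(cᵀf − F) ≤ |g̃ᵀΔ|/(κ'·m)`. -/
theorem stmt5 {V E : Type*} [Fintype V] [Fintype E] [DecidableEq V]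
    (tail head : E → V)
    (m C U : ℤ) (hm1 : 1 ≤ m) (hC1 : 1 ≤ C) (hU1 : 1 ≤ U)
    (hmE : (Fintype.card E : ℤ) ≤ m) (hmCU : 2 ≤ m * C * U)
    (c : E → ℤ) (hc : ∀ e, |c e| ≤ C)
    (u : E → ℤ) (hu : ∀ e, 1 ≤ u e ∧ u e ≤ U)
    (F : ℤ) (α δ : ℝ)
    (hα : α = 1 / (5000 * Real.log ((m * C * U : ℤ) : ℝ)))
    (hδ : δ = 1 / (20 * (m : ℝ) ^ 2 * (C : ℝ)))
    (ε : ℝ) (hε0 : 0 < ε) (hε : ε ≤ 1 / 2)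
    (κ' : ℝ) (hκ'0 : 0 < κ') (hκ'1 : κ' < 1)
    -- `f` is a strictly feasible circulation with `cᵀf > F`
    (f : E → ℝ) (hcirc : IsCirculation tail head f)
    (hfeas : ∀ e, -δ < f e ∧ f e < (u e : ℝ))
    (hcost : (F : ℝ) < ∑ e : E, (c e : ℝ) * f e)
    -- lengths `ℓ(f)` and gradient `g(f)`
    (ℓf gf : E → ℝ)
    (hℓf : ∀ e, ℓf e = ((u e : ℝ) - f e) ^ (-1 - α) + (f e + δ) ^ (-1 - α))
    (hgf : ∀ e, gf e = 20 * (m : ℝ) * ((∑ e' : E, (c e' : ℝ) * f e') - (F : ℝ))⁻¹ * (c e : ℝ)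
        + α * ((u e : ℝ) - f e) ^ (-1 - α) - α * (f e + δ) ^ (-1 - α))
    -- approximate gradient `g̃` and lengths `ℓ̃`
    (gt : E → ℝ) (hgt : ∀ e, |(ℓf e)⁻¹ * (gt e - gf e)| ≤ ε)
    (lt : E → ℝ) (hltpos : ∀ e, 0 < lt e)
    (hlt : ∀ e, lt e / 2 ≤ ℓf e ∧ ℓf e ≤ 2 * lt e)
    -- the circulation `Δ` of ratio at most `−κ'`
    (Δ : E → ℝ) (hΔcirc : IsCirculation tail head Δ) (hΔne : Δ ≠ 0)
    (hΔratio : (∑ e : E, gt e * Δ e) / (∑ e : E, lt e * |Δ e|) ≤ -κ') :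
    |∑ e : E, (c e : ℝ) * Δ e| / ((∑ e : E, (c e : ℝ) * f e) - (F : ℝ))
      ≤ |∑ e : E, gt e * Δ e| / (κ' * (m : ℝ)) := by
  have hm : (1 : ℝ) ≤ (m : ℝ) := by exact_mod_cast hm1
  set S : ℝ := (∑ e : E, (c e : ℝ) * f e) - (F : ℝ) with hSdef
  have hS : 0 < S := by simp only [hSdef]; linarith
  set G : ℝ := ∑ e : E, gt e * Δ e with hGdef
  set L1 : ℝ := ∑ e : E, lt e * |Δ e| with hL1def
  -- positivity of L1
  have hL1pos : 0 < L1 := by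
    obtain ⟨e0, he0⟩ : ∃ e, Δ e ≠ 0 := by
      by_contra h; push_neg at h; exact hΔne (funext h)
    exact Finset.sum_pos' (fun e _ => mul_nonneg (hltpos e).le (abs_nonneg _))
      ⟨e0, Finset.mem_univ _, mul_pos (hltpos e0) (abs_pos.mpr he0)⟩
  have hGle : G ≤ -κ' * L1 := by
    rw [div_le_iff₀ hL1pos] at hΔratio; linarith
  have hGneg : G < 0 := lt_of_le_of_lt hGle (by nlinarith)
  have habsG : |G| = -G := abs_of_neg hGneg
  have hκL1 : κ' * L1 ≤ |G| := by rw [habsG]; linarith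
  -- bounds on α
  have hmCUR : (2 : ℝ) ≤ ((m * C * U : ℤ) : ℝ) := by exact_mod_cast hmCU
  have hlog : (0.6 : ℝ) ≤ Real.log ((m * C * U : ℤ) : ℝ) := by
    have h2 : (0.6931471803 : ℝ) < Real.log 2 := Real.log_two_gt_d9
    have := Real.log_le_log (by norm_num : (0:ℝ) < 2) hmCUR
    linarith
  have hα0 : 0 < α := by rw [hα]; positivity
  have hαhalf : α ≤ 1 / 2 := by
    rw [hα]
    rw [div_le_div_iff₀ (by linarith) (by norm_num)]
    linarith
  -- per-edge positivity
  have hA : ∀ e : E, (0 : ℝ) < ((u e : ℝ) - f e) ^ (-1 - α) := fun e =>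
    Real.rpow_pos_of_pos (by linarith [(hfeas e).2]) _
  have hB : ∀ e : E, (0 : ℝ) < (f e + δ) ^ (-1 - α) := fun e =>
    Real.rpow_pos_of_pos (by linarith [(hfeas e).1]) _
  have hℓpos : ∀ e : E, 0 < ℓf e := fun e => by
    rw [hℓf e]; exact add_pos (hA e) (hB e)
  -- gradient error bound
  have hgterr : ∀ e : E, |gf e - gt e| ≤ ε * ℓf e := by
    intro e
    have h := hgt e
    rw [abs_mul, abs_inv, abs_of_pos (hℓpos e)] at h
    have h2 : |gt e - gf e| ≤ ε * ℓf e := by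
      rw [inv_mul_le_iff₀ (hℓpos e)] at h; linarith [h]
    rwa [abs_sub_comm]
  -- expression of c in terms of gf
  have hcform : ∀ e : E, (c e : ℝ) =
      S / (20 * (m : ℝ)) * (gf e - α * ((u e : ℝ) - f e) ^ (-1 - α)
        + α * (f e + δ) ^ (-1 - α)) := by
    intro e
    have h := hgf e
    have hm0 : (20 : ℝ) * (m : ℝ) ≠ 0 := by positivity
    field_simp [hS.ne'] at h ⊢
    linarith [h]
  -- sums
  set T : ℝ := ∑ e : E, gf e * Δ e with hTdef
  set Lf : ℝ := ∑ e : E, ℓf e * |Δ e| with hLfdef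
  have hLf2 : Lf ≤ 2 * L1 := by
    rw [hLfdef, hL1def, Finset.mul_sum]
    apply Finset.sum_le_sum
    intro e _
    nlinarith [(hlt e).2, abs_nonneg (Δ e)]
  have hLfnn : 0 ≤ Lf :=
    Finset.sum_nonneg fun e _ => mul_nonneg (hℓpos e).le (abs_nonneg _)
  have hTerr : |T| ≤ |G| + ε * Lf := by
    have hTG : T = G + ∑ e : E, (gf e - gt e) * Δ e := by
      rw [hTdef, hGdef, ← Finset.sum_add_distrib]
      congr 1; ext e; ring
    have h1 : |∑ e : E, (gf e - gt e) * Δ e| ≤ ε * Lf := by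
      calc |∑ e : E, (gf e - gt e) * Δ e| ≤ ∑ e : E, |(gf e - gt e) * Δ e| :=
            Finset.abs_sum_le_sum_abs _ _
        _ ≤ ∑ e : E, ε * (ℓf e * |Δ e|) := by
            apply Finset.sum_le_sum
            intro e _
            rw [abs_mul, ← mul_assoc]
            exact mul_le_mul_of_nonneg_right (hgterr e) (abs_nonneg _)
        _ = ε * Lf := by rw [hLfdef, Finset.mul_sum]
    calc |T| ≤ |G| + |∑ e : E, (gf e - gt e) * Δ e| := by
          rw [hTG]; exact abs_add_le _ _
      _ ≤ |G| + ε * Lf := by linarith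
  -- the α-term bound
  have hABsum : |∑ e : E, (((u e : ℝ) - f e) ^ (-1 - α) - (f e + δ) ^ (-1 - α)) * Δ e|
      ≤ Lf := by
    calc |∑ e : E, (((u e : ℝ) - f e) ^ (-1 - α) - (f e + δ) ^ (-1 - α)) * Δ e|
        ≤ ∑ e : E, |(((u e : ℝ) - f e) ^ (-1 - α) - (f e + δ) ^ (-1 - α)) * Δ e| :=
          Finset.abs_sum_le_sum_abs _ _
      _ ≤ ∑ e : E, ℓf e * |Δ e| := by
          apply Finset.sum_le_sum
          intro e _
          rw [abs_mul]
          apply mul_le_mul_of_nonneg_right _ (abs_nonneg _)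
          rw [hℓf e, abs_le]
          constructor <;> nlinarith [hA e, hB e]
      _ = Lf := hLfdef.symm
  -- the key identity for cᵀΔ
  have hcΔ : ∑ e : E, (c e : ℝ) * Δ e = S / (20 * (m : ℝ)) *
      (T - α * ∑ e : E, (((u e : ℝ) - f e) ^ (-1 - α) - (f e + δ) ^ (-1 - α)) * Δ e) := by
    rw [hTdef, Finset.mul_sum, mul_sub, Finset.mul_sum, Finset.mul_sum, ← Finset.sum_sub_distrib]
    apply Finset.sum_congr rfl
    intro e _
    rw [hcform e]; ring
  have hcΔabs : |∑ e : E, (c e : ℝ) * Δ e| ≤ S / (20 * (m : ℝ)) * (|T| + α * Lf) := by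
    rw [hcΔ, abs_mul, abs_of_pos (by positivity : (0:ℝ) < S / (20 * (m : ℝ)))]
    apply mul_le_mul_of_nonneg_left _ (by positivity)
    calc |T - α * ∑ e : E, (((u e : ℝ) - f e) ^ (-1 - α) - (f e + δ) ^ (-1 - α)) * Δ e|
        ≤ |T| + |α * ∑ e : E, (((u e : ℝ) - f e) ^ (-1 - α) - (f e + δ) ^ (-1 - α)) * Δ e| :=
          abs_sub _ _
      _ = |T| + α * |∑ e : E, (((u e : ℝ) - f e) ^ (-1 - α) - (f e + δ) ^ (-1 - α)) * Δ e| := by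
          rw [abs_mul, abs_of_pos hα0]
      _ ≤ |T| + α * Lf :=
          add_le_add_right (mul_le_mul_of_nonneg_left hABsum hα0.le) _
  -- final arithmetic
  have hLfG : κ' * Lf ≤ 2 * |G| := by
    have h1 : κ' * Lf ≤ κ' * (2 * L1) := mul_le_mul_of_nonneg_left hLf2 hκ'0.le
    linarith
  have hmain : |∑ e : E, (c e : ℝ) * Δ e| ≤ S / (20 * (m : ℝ)) * (|G| + (ε + α) * Lf) := by
    calc |∑ e : E, (c e : ℝ) * Δ e| ≤ S / (20 * (m : ℝ)) * (|T| + α * Lf) := hcΔabs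
      _ ≤ S / (20 * (m : ℝ)) * (|G| + (ε + α) * Lf) := by
          apply mul_le_mul_of_nonneg_left _ (by positivity)
          nlinarith [hTerr]
  rw [div_le_div_iff₀ hS (by positivity)]
  have hGnn : 0 ≤ |G| := abs_nonneg _
  have h20m : (0:ℝ) < 20 * (m:ℝ) := by positivity
  have key : S / (20 * (m : ℝ)) * (|G| + (ε + α) * Lf) * (κ' * (m:ℝ)) ≤ |G| * S := by
    rw [div_mul_eq_mul_div, div_mul_eq_mul_div, div_le_iff₀ h20m]
    have hmS : (0:ℝ) < (m:ℝ) * S := by positivity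
    have hεα : ε + α ≤ 1 := by linarith
    have h1 : (ε + α) * (κ' * Lf) ≤ (ε + α) * (2 * |G|) := by
      apply mul_le_mul_of_nonneg_left hLfG (by linarith)
    have h2 : (ε + α) * (2 * |G|) ≤ 2 * |G| := by nlinarith
    have h3 : (m:ℝ) * S * ((ε + α) * (κ' * Lf)) ≤ (m:ℝ) * S * (2 * |G|) :=
      mul_le_mul_of_nonneg_left (h1.trans h2) hmS.le
    have h4 : κ' * ((m:ℝ) * S * |G|) ≤ 1 * ((m:ℝ) * S * |G|) :=
      mul_le_mul_of_nonneg_right hκ'1.le (by positivity)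
    nlinarith [h3, h4, mul_nonneg hmS.le hGnn]
  calc |∑ e : E, (c e : ℝ) * Δ e| * (κ' * (m:ℝ))
      ≤ S / (20 * (m : ℝ)) * (|G| + (ε + α) * Lf) * (κ' * (m:ℝ)) := by
        apply mul_le_mul_of_nonneg_right hmain (by positivity)
    _ ≤ |G| * S := key
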